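/- (Lemma, vertices of the dominant face) Let p ∈ (0,1) and n ≥ 1, and let F = { λ ∈ ℝ^n : λ_j ≥ 0 for all j, Σ_{j∈S} λ_j ≤ 1 − p^{|S|} for every nonempty S ⊆ {1,…,n}, and Σ_{j=1}^{n} λ_j = 1 − p^n } be the dominant face of the stability region. For every permutation π of {1,…,n}, the vector λ^π defined by λ^π_{π(i)} = (1−p) p^{i−1} belongs to F and is an extreme point of F; conversely, every extreme point of F is of the form λ^π for some permutation π. Hence extreme points of F are in one-to-one correspondence with permutations of {1,…,n} (the vectors λ^π being pairwise distinct). -/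

import Mathlib

lemma geom_range (p : ℝ) (k : ℕ) : ∑ i ∈ Finset.range k, (1 - p) * p ^ i = 1 - p ^ k := by
  induction k with
  | zero => simp
  | succ k ih => rw [Finset.sum_range_succ, ih]; ring

lemma sum_pow_le_range (p : ℝ) (hp0 : 0 ≤ p) (hp1 : p ≤ 1) (T : Finset ℕ) :
    ∑ i ∈ T, p ^ i ≤ ∑ i ∈ Finset.range T.card, p ^ i := by
  induction T using Finset.strongInduction with
  | _ T ih =>
    rcases T.eq_empty_or_nonempty with rfl | hT
    · simp
    · have hm := T.max'_mem hT
      set m := T.max' hT with hmdef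
      have hsub : T ⊆ Finset.range (m + 1) :=
        fun a ha => Finset.mem_range.2 (Nat.lt_succ_of_le (Finset.le_max' T a ha))
      have hcard_le : T.card ≤ m + 1 := by
        simpa using Finset.card_le_card hsub
      have hc1 : 1 ≤ T.card := Finset.card_pos.2 hT
      have h1 : T.card - 1 ≤ m := by omega
      have herase := ih (T.erase m) (Finset.erase_ssubset hm)
      have hcard : (T.erase m).card = T.card - 1 := Finset.card_erase_of_mem hm
      have hpow : p ^ m ≤ p ^ (T.card - 1) := pow_le_pow_of_le_one hp0 hp1 h1
      have hsum : (∑ i ∈ T.erase m, p ^ i) + p ^ m = ∑ i ∈ T, p ^ i :=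
        Finset.sum_erase_add _ _ hm
      have hrange : ∑ i ∈ Finset.range (T.card - 1), p ^ i + p ^ (T.card - 1)
          = ∑ i ∈ Finset.range T.card, p ^ i := by
        have hc : T.card - 1 + 1 = T.card := by omega
        rw [← Finset.sum_range_succ, hc]
      rw [hcard] at herase
      linarith

lemma geom_set (p : ℝ) (hp0 : 0 ≤ p) (hp1 : p ≤ 1) (n : ℕ) (T : Finset (Fin n)) :
    ∑ i ∈ T, (1 - p) * p ^ (i : ℕ) ≤ 1 - p ^ T.card := by
  have hinj : Function.Injective (Fin.val : Fin n → ℕ) := Fin.val_injective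
  have h1 : ∑ m ∈ T.image Fin.val, p ^ m = ∑ i ∈ T, p ^ (i : ℕ) :=
    Finset.sum_image (fun x _ y _ h => hinj h)
  have h2 : (T.image Fin.val).card = T.card := Finset.card_image_of_injective _ hinj
  have h3 := sum_pow_le_range p hp0 hp1 (T.image Fin.val)
  rw [h1, h2] at h3
  have h4 : (0:ℝ) ≤ 1 - p := by linarith
  calc ∑ i ∈ T, (1 - p) * p ^ (i : ℕ) = (1 - p) * ∑ i ∈ T, p ^ (i : ℕ) := by
        rw [Finset.mul_sum]
    _ ≤ (1 - p) * ∑ i ∈ Finset.range T.card, p ^ i := by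
        exact mul_le_mul_of_nonneg_left h3 h4
    _ = ∑ i ∈ Finset.range T.card, (1 - p) * p ^ i := by rw [Finset.mul_sum]
    _ = 1 - p ^ T.card := geom_range p T.card

lemma geom_univ (p : ℝ) (n : ℕ) : ∑ i : Fin n, (1 - p) * p ^ (i : ℕ) = 1 - p ^ n := by
  rw [Fin.sum_univ_eq_sum_range (fun i => (1 - p) * p ^ i), geom_range]

lemma sum_perm_image (n : ℕ) (π : Equiv.Perm (Fin n)) (l : Fin n → ℝ) (S : Finset (Fin n)) :
    ∑ i ∈ S.image π.symm, l (π i) = ∑ j ∈ S, l j := by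
  rw [Finset.sum_image (fun x _ y _ h => π.symm.injective h)]
  simp

lemma lam_mem (p : ℝ) (hp0 : 0 < p) (hp1 : p < 1) (n : ℕ)
    (π : Equiv.Perm (Fin n)) (l : Fin n → ℝ)
    (hl : ∀ i, l (π i) = (1 - p) * p ^ (i : ℕ)) :
    (∀ j, 0 ≤ l j) ∧
    (∀ S : Finset (Fin n), S.Nonempty → (∑ j ∈ S, l j) ≤ 1 - p ^ S.card) ∧
    (∑ j : Fin n, l j) = 1 - p ^ n := by
  refine ⟨fun j => ?_, fun S _ => ?_, ?_⟩
  · have h := hl (π.symm j)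
    rw [Equiv.apply_symm_apply] at h
    rw [h]
    have : (0:ℝ) ≤ 1 - p := by linarith
    positivity
  · rw [← sum_perm_image n π l S]
    have h1 : ∑ i ∈ S.image π.symm, l (π i) = ∑ i ∈ S.image π.symm, (1 - p) * p ^ (i:ℕ) :=
      Finset.sum_congr rfl (fun i _ => hl i)
    rw [h1]
    have h2 : (S.image π.symm).card = S.card :=
      Finset.card_image_of_injective _ π.symm.injective
    rw [← h2]
    exact geom_set p hp0.le hp1.le n _
  · rw [← Equiv.sum_comp π l]
    calc ∑ i : Fin n, l (π i) = ∑ i : Fin n, (1 - p) * p ^ (i:ℕ) :=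
          Finset.sum_congr rfl (fun i _ => hl i)
      _ = 1 - p ^ n := geom_univ p n

lemma filt_val_image (n k : ℕ) (hk : k ≤ n) :
    ((Finset.univ : Finset (Fin n)).filter (fun i : Fin n => (i:ℕ) < k)).image Fin.val
      = Finset.range k := by
  ext m
  simp only [Finset.mem_image, Finset.mem_filter, Finset.mem_univ, true_and, Finset.mem_range]
  constructor
  · rintro ⟨i, hi, rfl⟩; exact hi
  · intro hm; exact ⟨⟨m, lt_of_lt_of_le hm hk⟩, hm, rfl⟩

lemma filt_card (n k : ℕ) (hk : k ≤ n) :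
    ((Finset.univ : Finset (Fin n)).filter (fun i : Fin n => (i:ℕ) < k)).card = k := by
  have h := filt_val_image n k hk
  have h2 := Finset.card_image_of_injective
    ((Finset.univ : Finset (Fin n)).filter (fun i : Fin n => (i:ℕ) < k)) Fin.val_injective
  rw [h, Finset.card_range] at h2
  omega

lemma filt_sum (n k : ℕ) (hk : k ≤ n) (g : ℕ → ℝ) :
    ∑ i ∈ (Finset.univ : Finset (Fin n)).filter (fun i : Fin n => (i:ℕ) < k), g (i:ℕ)
      = ∑ m ∈ Finset.range k, g m := by
  rw [← filt_val_image n k hk, Finset.sum_image (fun x _ y _ h => Fin.val_injective h)]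

lemma filt_succ (n k : ℕ) (hk : k < n) :
    (Finset.univ : Finset (Fin n)).filter (fun i : Fin n => (i:ℕ) < k + 1)
      = insert ⟨k, hk⟩ ((Finset.univ : Finset (Fin n)).filter (fun i : Fin n => (i:ℕ) < k)) := by
  ext i
  simp only [Finset.mem_filter, Finset.mem_univ, true_and, Finset.mem_insert, Fin.ext_iff]
  omega

lemma tight_force (p : ℝ) (n : ℕ) (π : Equiv.Perm (Fin n)) (l : Fin n → ℝ)
    (hl : ∀ k, k ≤ n → ∑ i ∈ (Finset.univ : Finset (Fin n)).filter (fun i : Fin n => (i:ℕ) < k),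
        l (π i) = 1 - p ^ k) :
    ∀ i : Fin n, l (π i) = (1 - p) * p ^ (i : ℕ) := by
  intro i
  have hk : (i:ℕ) < n := i.isLt
  have h1 := hl (i:ℕ) hk.le
  have h2 := hl ((i:ℕ) + 1) hk
  rw [filt_succ n (i:ℕ) hk] at h2
  have hnotmem : (⟨(i:ℕ), hk⟩ : Fin n) ∉
      (Finset.univ : Finset (Fin n)).filter (fun j : Fin n => (j:ℕ) < (i:ℕ)) := by
    simp
  rw [Finset.sum_insert hnotmem] at h2
  have : (⟨(i:ℕ), hk⟩ : Fin n) = i := rfl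
  rw [this] at h2
  rw [h1] at h2
  linear_combination h2

lemma combo_eq {a b Y Z c : ℝ} (ha : 0 < a) (hb : 0 < b) (hab : a + b = 1)
    (h : a * Y + b * Z = c) (hY : Y ≤ c) (hZ : Z ≤ c) : Y = c ∧ Z = c := by
  have h1 : a * Y ≤ a * c := mul_le_mul_of_nonneg_left hY ha.le
  have h2 : b * Z ≤ b * c := mul_le_mul_of_nonneg_left hZ hb.le
  have hc : a * c + b * c = c := by rw [← add_mul, hab, one_mul]
  have h3 : a * Y = a * c := by linarith
  have h4 : b * Z = b * c := by linarith
  exact ⟨mul_left_cancel₀ (ne_of_gt ha) h3, mul_left_cancel₀ (ne_of_gt hb) h4⟩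

lemma eq_of_comp_perm (n : ℕ) (π : Equiv.Perm (Fin n)) (y l : Fin n → ℝ)
    (h : ∀ i, y (π i) = l (π i)) : y = l := by
  funext j
  have := h (π.symm j)
  simpa using this

lemma lam_extreme (p : ℝ) (hp0 : 0 < p) (hp1 : p < 1) (n : ℕ)
    (F : Set (Fin n → ℝ))
    (hF : F = {l : Fin n → ℝ |
        (∀ j, 0 ≤ l j) ∧
        (∀ S : Finset (Fin n), S.Nonempty → (∑ j ∈ S, l j) ≤ 1 - p ^ S.card) ∧
        (∑ j : Fin n, l j) = 1 - p ^ n})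
    (π : Equiv.Perm (Fin n)) (l : Fin n → ℝ)
    (hl : ∀ i, l (π i) = (1 - p) * p ^ (i : ℕ)) :
    l ∈ F.extremePoints ℝ := by
  have hmem : l ∈ F := by rw [hF]; exact lam_mem p hp0 hp1 n π l hl
  rw [mem_extremePoints]
  refine ⟨hmem, ?_⟩
  intro y hy z hz hseg
  obtain ⟨a, b, ha, hb, hab, hsum⟩ := hseg
  have happ : ∀ j, a * y j + b * z j = l j := by
    intro j
    have := congrFun hsum j
    simpa using this
  -- upper bound for members
  have hle : ∀ w : Fin n → ℝ, w ∈ F → ∀ k, k ≤ n →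
      ∑ i ∈ (Finset.univ : Finset (Fin n)).filter (fun i : Fin n => (i:ℕ) < k), w (π i)
        ≤ 1 - p ^ k := by
    intro w hw k hk
    rw [hF] at hw
    obtain ⟨-, hw2, -⟩ := hw
    rcases Nat.eq_zero_or_pos k with rfl | hkpos
    · simp
    · set T := (Finset.univ : Finset (Fin n)).filter (fun i : Fin n => (i:ℕ) < k) with hT
      have himg : ∑ j ∈ T.image π, w j = ∑ i ∈ T, w (π i) :=
        Finset.sum_image (fun x _ y _ h => π.injective h)
      have hcard : (T.image π).card = k := by
        rw [Finset.card_image_of_injective _ π.injective, hT, filt_card n k hk]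
      have hne : (T.image π).Nonempty := Finset.card_pos.1 (by rw [hcard]; exact hkpos)
      have hb := hw2 (T.image π) hne
      rw [hcard, himg] at hb
      exact hb
  -- tight values of l
  have hLk : ∀ k, k ≤ n →
      ∑ i ∈ (Finset.univ : Finset (Fin n)).filter (fun i : Fin n => (i:ℕ) < k), l (π i)
        = 1 - p ^ k := by
    intro k hk
    calc ∑ i ∈ (Finset.univ : Finset (Fin n)).filter (fun i : Fin n => (i:ℕ) < k), l (π i)
        = ∑ i ∈ (Finset.univ : Finset (Fin n)).filter (fun i : Fin n => (i:ℕ) < k),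
            (1 - p) * p ^ (i:ℕ) := Finset.sum_congr rfl (fun i _ => hl i)
      _ = ∑ m ∈ Finset.range k, (1 - p) * p ^ m := filt_sum n k hk (fun m => (1 - p) * p ^ m)
      _ = 1 - p ^ k := geom_range p k
  -- tightness of y and z
  have hyztight : ∀ k, k ≤ n →
      (∑ i ∈ (Finset.univ : Finset (Fin n)).filter (fun i : Fin n => (i:ℕ) < k), y (π i)
        = 1 - p ^ k) ∧
      (∑ i ∈ (Finset.univ : Finset (Fin n)).filter (fun i : Fin n => (i:ℕ) < k), z (π i)
        = 1 - p ^ k) := by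
    intro k hk
    set T := (Finset.univ : Finset (Fin n)).filter (fun i : Fin n => (i:ℕ) < k) with hT
    have hcomb : a * (∑ i ∈ T, y (π i)) + b * (∑ i ∈ T, z (π i)) = 1 - p ^ k := by
      rw [← hLk k hk]
      rw [Finset.mul_sum, Finset.mul_sum, ← Finset.sum_add_distrib]
      exact Finset.sum_congr rfl (fun i _ => happ (π i))
    exact combo_eq ha hb hab hcomb (hle y hy k hk) (hle z hz k hk)
  have hyeq : y = l := eq_of_comp_perm n π y l (by
    intro i
    rw [hl i]
    exact tight_force p n π y (fun k hk => (hyztight k hk).1) i)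
  have hzeq : z = l := eq_of_comp_perm n π z l (by
    intro i
    rw [hl i]
    exact tight_force p n π z (fun k hk => (hyztight k hk).2) i)
  exact ⟨hyeq, hzeq⟩


section Converse

variable (p : ℝ) (n : ℕ)

/-- Step A: every member of F has strictly positive coordinates. -/
lemma coords_pos (hp0 : 0 < p) (hp1 : p < 1) (hn : 1 ≤ n) (x : Fin n → ℝ)
    (hxS : ∀ S : Finset (Fin n), S.Nonempty → (∑ j ∈ S, x j) ≤ 1 - p ^ S.card)
    (hxtot : (∑ j : Fin n, x j) = 1 - p ^ n) :
    ∀ j, 0 < x j := by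
  intro j
  have h1 : (Finset.univ.erase j).card = n - 1 := by
    rw [Finset.card_erase_of_mem (Finset.mem_univ j), Finset.card_univ, Fintype.card_fin]
  have h2 : ∑ k ∈ Finset.univ.erase j, x k ≤ 1 - p ^ (n - 1) := by
    rcases (Finset.univ.erase j).eq_empty_or_nonempty with he | hne
    · have : n - 1 = 0 := by rw [← h1, he, Finset.card_empty]
      rw [he, this]
      simp
    · have := hxS _ hne
      rwa [h1] at this
  have h3 : ∑ k ∈ Finset.univ.erase j, x k + x j = 1 - p ^ n := by
    rw [Finset.sum_erase_add _ _ (Finset.mem_univ j)]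
    exact hxtot
  have hpn : p ^ n = p ^ (n - 1) * p := by
    rw [← pow_succ]
    congr 1
    omega
  have hkey : p ^ (n - 1) * p < p ^ (n - 1) * 1 :=
    mul_lt_mul_of_pos_left hp1 (pow_pos hp0 _)
  rw [mul_one] at hkey
  linarith

/-- Step B: tight sets form a chain. -/
lemma tight_chain (hp0 : 0 < p) (hp1 : p < 1) (x : Fin n → ℝ)
    (hxS : ∀ S : Finset (Fin n), S.Nonempty → (∑ j ∈ S, x j) ≤ 1 - p ^ S.card)
    (A B : Finset (Fin n))
    (hA : ∑ j ∈ A, x j = 1 - p ^ A.card) (hB : ∑ j ∈ B, x j = 1 - p ^ B.card) :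
    A ⊆ B ∨ B ⊆ A := by
  by_contra hcon
  push_neg at hcon
  obtain ⟨h1, h2⟩ := hcon
  have hAne : A.Nonempty := by
    rcases A.eq_empty_or_nonempty with rfl | h
    · exact absurd (Finset.empty_subset B) h1
    · exact h
  have hiA : A ∩ B ⊂ A := by
    rw [Finset.ssubset_def]
    refine ⟨Finset.inter_subset_left, fun hsub => h1 (fun a ha => ?_)⟩
    exact Finset.mem_of_mem_inter_right (hsub ha)
  have hiB : A ∩ B ⊂ B := by
    rw [Finset.ssubset_def]
    refine ⟨Finset.inter_subset_right, fun hsub => h2 (fun b hb => ?_)⟩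
    exact Finset.mem_of_mem_inter_left (hsub hb)
  have hAu : A ⊂ A ∪ B := by
    rw [Finset.ssubset_def]
    refine ⟨Finset.subset_union_left, fun hsub => h2 (fun b hb => ?_)⟩
    exact hsub (Finset.mem_union_right A hb)
  have hci_ca : (A ∩ B).card < A.card := Finset.card_lt_card hiA
  have hci_cb : (A ∩ B).card < B.card := Finset.card_lt_card hiB
  have hca_cu : A.card < (A ∪ B).card := Finset.card_lt_card hAu
  have hsum_cards : (A ∩ B).card + (A ∪ B).card = A.card + B.card :=
    Finset.card_inter_add_card_union A B
  -- sum bounds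
  have hu : ∑ j ∈ A ∪ B, x j ≤ 1 - p ^ (A ∪ B).card :=
    hxS _ (hAne.mono Finset.subset_union_left)
  have hi : ∑ j ∈ A ∩ B, x j ≤ 1 - p ^ (A ∩ B).card := by
    rcases (A ∩ B).eq_empty_or_nonempty with he | hne
    · rw [he]; simp
    · exact hxS _ hne
  have hsums : ∑ j ∈ A ∪ B, x j + ∑ j ∈ A ∩ B, x j = ∑ j ∈ A, x j + ∑ j ∈ B, x j :=
    Finset.sum_union_inter
  have hstar : p ^ (A ∪ B).card + p ^ (A ∩ B).card ≤ p ^ A.card + p ^ B.card := by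
    rw [hA, hB] at hsums
    linarith
  -- strict concavity contradiction
  set ci := (A ∩ B).card
  set ca := A.card
  set cb := B.card
  set cu := (A ∪ B).card
  obtain ⟨d1, hd1⟩ : ∃ d1, ca = ci + d1 := ⟨ca - ci, by omega⟩
  obtain ⟨d2, hd2⟩ : ∃ d2, cb = ci + d2 := ⟨cb - ci, by omega⟩
  have hcu : cu = ci + d1 + d2 := by omega
  have e1 : p ^ ca = p ^ ci * p ^ d1 := by rw [hd1, pow_add]
  have e2 : p ^ cb = p ^ ci * p ^ d2 := by rw [hd2, pow_add]
  have eu : p ^ cu = p ^ ci * p ^ d1 * p ^ d2 := by rw [hcu, pow_add, pow_add]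
  have hq1 : p ^ d1 < 1 := pow_lt_one₀ hp0.le hp1 (by omega)
  have hq2 : p ^ d2 < 1 := pow_lt_one₀ hp0.le hp1 (by omega)
  have hP : (0:ℝ) < p ^ ci := pow_pos hp0 _
  have key : 0 < p ^ ci * ((1 - p ^ d1) * (1 - p ^ d2)) :=
    mul_pos hP (mul_pos (by linarith) (by linarith))
  nlinarith [key, hstar, e1, e2, eu]

end Converse

/-- Step C: for an extreme point, some tight set separates any two coordinates. -/
lemma tight_sep (p : ℝ) (hp0 : 0 < p) (hp1 : p < 1) (n : ℕ) (hn : 1 ≤ n)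
    (F : Set (Fin n → ℝ))
    (hF : F = {l : Fin n → ℝ |
        (∀ j, 0 ≤ l j) ∧
        (∀ S : Finset (Fin n), S.Nonempty → (∑ j ∈ S, l j) ≤ 1 - p ^ S.card) ∧
        (∑ j : Fin n, l j) = 1 - p ^ n})
    (x : Fin n → ℝ) (hxF : x ∈ F)
    (hxe : ∀ y ∈ F, ∀ z ∈ F, x ∈ openSegment ℝ y z → y = x ∧ z = x)
    (i j : Fin n) (hij : i ≠ j) :
    ∃ S : Finset (Fin n), (∑ k ∈ S, x k = 1 - p ^ S.card) ∧ ¬(i ∈ S ↔ j ∈ S) := by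
  classical
  obtain ⟨hx0, hxS, hxtot⟩ : (∀ k, 0 ≤ x k) ∧
      (∀ S : Finset (Fin n), S.Nonempty → (∑ k ∈ S, x k) ≤ 1 - p ^ S.card) ∧
      (∑ k : Fin n, x k) = 1 - p ^ n := by rw [hF] at hxF; exact hxF
  by_contra hcon
  push_neg at hcon
  have hpos := coords_pos p n hp0 hp1 hn x hxS hxtot
  set slack : Finset (Fin n) → ℝ :=
    fun S => if (i ∈ S ↔ j ∈ S) then 1 else (1 - p ^ S.card) - ∑ k ∈ S, x k with hslackdef
  have hslack_pos : ∀ S, 0 < slack S := by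
    intro S
    by_cases hS : (i ∈ S ↔ j ∈ S)
    · simp [hslackdef, hS]
    · have hne : S.Nonempty := by
        by_contra hSe
        rw [Finset.not_nonempty_iff_eq_empty] at hSe
        subst hSe
        simp at hS
      have hnt : ∑ k ∈ S, x k ≠ 1 - p ^ S.card := fun ht => hS (hcon S ht)
      have hle := hxS S hne
      simp only [hslackdef, if_neg hS]
      cases lt_or_eq_of_le hle with
      | inl h => linarith
      | inr h => exact absurd h hnt
  set ε : ℝ := min (min (x i) (x j))
      ((Finset.univ : Finset (Finset (Fin n))).inf' Finset.univ_nonempty slack) with hεdef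
  have hε : 0 < ε := by
    apply lt_min (lt_min (hpos i) (hpos j))
    rw [Finset.lt_inf'_iff]
    exact fun S _ => hslack_pos S
  have hεi : ε ≤ x i := le_trans (min_le_left _ _) (min_le_left _ _)
  have hεj : ε ≤ x j := le_trans (min_le_left _ _) (min_le_right _ _)
  have hεs : ∀ S : Finset (Fin n), ¬(i ∈ S ↔ j ∈ S) →
      ε ≤ (1 - p ^ S.card) - ∑ k ∈ S, x k := by
    intro S hS
    have h1 : ε ≤ slack S :=
      le_trans (min_le_right _ _) (Finset.inf'_le _ (Finset.mem_univ S))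
    have h2 : slack S = 1 - p ^ S.card - ∑ k ∈ S, x k := by simp [hslackdef, hS]
    rw [h2] at h1
    linarith
  set w : ℝ → Fin n → ℝ :=
    fun t k => x k + t * ((if k = i then (1:ℝ) else 0) - (if k = j then (1:ℝ) else 0))
    with hwdef
  have hwsum : ∀ (t : ℝ) (S : Finset (Fin n)), ∑ k ∈ S, w t k =
      ∑ k ∈ S, x k + t * ((if i ∈ S then (1:ℝ) else 0) - (if j ∈ S then (1:ℝ) else 0)) := by
    intro t S
    rw [hwdef]
    simp only []
    rw [Finset.sum_add_distrib, ← Finset.mul_sum, Finset.sum_sub_distrib,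
      Finset.sum_ite_eq' S i (fun _ => (1:ℝ)), Finset.sum_ite_eq' S j (fun _ => (1:ℝ))]
  have hwF : ∀ t : ℝ, -ε ≤ t → t ≤ ε → w t ∈ F := by
    intro t ht1 ht2
    rw [hF]
    refine ⟨fun k => ?_, fun S hSne => ?_, ?_⟩
    · by_cases hk1 : k = i
      · subst hk1
        have hval : w t k = x k + t := by simp [hwdef, hij]
        rw [hval]
        linarith
      · by_cases hk2 : k = j
        · subst hk2
          have hval : w t k = x k + -t := by simp [hwdef, hk1]
          rw [hval]
          linarith
        · have hval : w t k = x k := by simp [hwdef, hk1, hk2]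
          rw [hval]
          exact hx0 k
    · rw [hwsum]
      by_cases hiS : i ∈ S <;> by_cases hjS : j ∈ S
      · simp only [if_pos hiS, if_pos hjS]
        have := hxS S hSne
        linarith
      · have hsep : ¬(i ∈ S ↔ j ∈ S) := by tauto
        have := hεs S hsep
        simp only [if_pos hiS, if_neg hjS]
        linarith
      · have hsep : ¬(i ∈ S ↔ j ∈ S) := by tauto
        have := hεs S hsep
        simp only [if_neg hiS, if_pos hjS]
        linarith
      · simp only [if_neg hiS, if_neg hjS]
        have := hxS S hSne
        linarith
    · rw [hwsum]
      simp only [if_pos (Finset.mem_univ i), if_pos (Finset.mem_univ j)]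
      rw [hxtot]
      ring
  have hyF := hwF ε (by linarith) (le_refl ε)
  have hzF := hwF (-ε) (le_refl _) (by linarith)
  have hseg : x ∈ openSegment ℝ (w ε) (w (-ε)) := by
    refine ⟨1/2, 1/2, by norm_num, by norm_num, by norm_num, ?_⟩
    funext k
    rw [hwdef]
    simp only [Pi.add_apply, Pi.smul_apply, smul_eq_mul]
    ring
  have hcontra := (hxe (w ε) hyF (w (-ε)) hzF hseg).1
  have h1 : w ε i = x i := congrFun hcontra i
  have h2 : w ε i = x i + ε := by simp [hwdef, hij]
  rw [h2] at h1
  linarith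

/-- Step D1: every cardinality `k ≤ n` is achieved by a tight set. -/
lemma tight_all_cards (p : ℝ) (hp0 : 0 < p) (hp1 : p < 1) (n : ℕ)
    (x : Fin n → ℝ)
    (hxS : ∀ S : Finset (Fin n), S.Nonempty → (∑ j ∈ S, x j) ≤ 1 - p ^ S.card)
    (hxtot : (∑ j : Fin n, x j) = 1 - p ^ n)
    (hsep : ∀ i j : Fin n, i ≠ j →
      ∃ S : Finset (Fin n), (∑ k ∈ S, x k = 1 - p ^ S.card) ∧ ¬(i ∈ S ↔ j ∈ S)) :
    ∀ k, k ≤ n → ∃ S : Finset (Fin n), (∑ j ∈ S, x j = 1 - p ^ S.card) ∧ S.card = k := by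
  classical
  have htempty : ∑ j ∈ (∅ : Finset (Fin n)), x j = 1 - p ^ (∅ : Finset (Fin n)).card := by simp
  have htuniv : ∑ j ∈ (Finset.univ : Finset (Fin n)), x j
      = 1 - p ^ (Finset.univ : Finset (Fin n)).card := by
    rw [Finset.card_univ, Fintype.card_fin]
    exact hxtot
  by_contra hcon
  push_neg at hcon
  obtain ⟨k, hk, hknot⟩ := hcon
  set D : Finset ℕ := (Finset.range (n+1)).filter
    (fun c => ∃ S : Finset (Fin n), (∑ j ∈ S, x j = 1 - p ^ S.card) ∧ S.card = c) with hD
  have h0D : 0 ∈ D := by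
    rw [hD, Finset.mem_filter]
    exact ⟨Finset.mem_range.2 (Nat.succ_pos n), ⟨∅, htempty, Finset.card_empty⟩⟩
  have hnD : n ∈ D := by
    rw [hD, Finset.mem_filter]
    refine ⟨Finset.mem_range.2 (Nat.lt_succ_self n), ⟨Finset.univ, htuniv, ?_⟩⟩
    rw [Finset.card_univ, Fintype.card_fin]
  have hkD : k ∉ D := by
    rw [hD, Finset.mem_filter]
    rintro ⟨-, S, hS1, hS2⟩
    exact hknot S hS1 hS2
  have hk0 : 0 < k := by
    rcases Nat.eq_zero_or_pos k with rfl | h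
    · exact absurd h0D hkD
    · exact h
  have hkn : k < n := by
    rcases lt_or_eq_of_le hk with h | rfl
    · exact h
    · exact absurd hnD hkD
  set D1 := D.filter (fun c => c < k) with hD1
  set D2 := D.filter (fun c => k < c) with hD2
  have hD1ne : D1.Nonempty := ⟨0, by rw [hD1, Finset.mem_filter]; exact ⟨h0D, hk0⟩⟩
  have hD2ne : D2.Nonempty := ⟨n, by rw [hD2, Finset.mem_filter]; exact ⟨hnD, hkn⟩⟩
  set c1 := D1.max' hD1ne with hc1
  set c2 := D2.min' hD2ne with hc2
  have hc1mem := D1.max'_mem hD1ne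
  have hc2mem := D2.min'_mem hD2ne
  obtain ⟨hc1D, hc1k⟩ := Finset.mem_filter.1 hc1mem
  obtain ⟨hc2D, hc2k⟩ := Finset.mem_filter.1 hc2mem
  obtain ⟨-, S, hSt, hScard⟩ := Finset.mem_filter.1 hc1D
  obtain ⟨-, T, hTt, hTcard⟩ := Finset.mem_filter.1 hc2D
  have hSc_lt : S.card < T.card := by omega
  have hST : S ⊆ T := by
    rcases tight_chain p n hp0 hp1 x hxS S T hSt hTt with h | h
    · exact h
    · have := Finset.card_le_card h
      omega
  have hsd : 2 ≤ (T \ S).card := by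
    rw [Finset.card_sdiff_of_subset hST]
    omega
  obtain ⟨i, hi, j, hj, hij⟩ := Finset.one_lt_card.1 hsd
  rw [Finset.mem_sdiff] at hi hj
  obtain ⟨R, hRt, hRiff⟩ := hsep i j hij
  -- the generic argument for a separated pair
  have main : ∀ a b : Fin n, a ∈ T → a ∉ S → b ∈ T → b ∉ S → a ∈ R → b ∉ R → False := by
    intro a b haT haS hbT hbS haR hbR
    have hSR : S ⊆ R := by
      rcases tight_chain p n hp0 hp1 x hxS S R hSt hRt with h | h
      · exact h
      · exact absurd (h haR) haS
    have hRT : R ⊆ T := by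
      rcases tight_chain p n hp0 hp1 x hxS R T hRt hTt with h | h
      · exact h
      · exact absurd (h hbT) hbR
    have hc1R : c1 < R.card := by
      have : S ⊂ R := Finset.ssubset_def.2 ⟨hSR, fun h => haS (h haR)⟩
      have := Finset.card_lt_card this
      omega
    have hRc2 : R.card < c2 := by
      have : R ⊂ T := Finset.ssubset_def.2 ⟨hRT, fun h => hbR (h hbT)⟩
      have := Finset.card_lt_card this
      omega
    have hRD : R.card ∈ D := by
      rw [hD, Finset.mem_filter]
      refine ⟨Finset.mem_range.2 ?_, ⟨R, hRt, rfl⟩⟩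
      have := Finset.card_le_univ R
      rw [Fintype.card_fin] at this
      omega
    rcases lt_trichotomy R.card k with h | h | h
    · have : R.card ∈ D1 := by rw [hD1, Finset.mem_filter]; exact ⟨hRD, h⟩
      have := D1.le_max' _ this
      omega
    · exact hknot R hRt h
    · have : R.card ∈ D2 := by rw [hD2, Finset.mem_filter]; exact ⟨hRD, h⟩
      have := D2.min'_le _ this
      omega
  by_cases hiR : i ∈ R
  · have hjR : j ∉ R := fun h => hRiff ⟨fun _ => h, fun _ => hiR⟩
    exact main i j hi.1 hi.2 hj.1 hj.2 hiR hjR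
  · have hjR : j ∈ R := by tauto
    exact main j i hj.1 hj.2 hi.1 hi.2 hjR hiR

/-- Step D2: from tight sets of all cardinalities, build the permutation. -/
lemma exists_perm_of_cards (p : ℝ) (hp0 : 0 < p) (hp1 : p < 1) (n : ℕ)
    (x : Fin n → ℝ)
    (hxS : ∀ S : Finset (Fin n), S.Nonempty → (∑ j ∈ S, x j) ≤ 1 - p ^ S.card)
    (hall : ∀ k, k ≤ n → ∃ S : Finset (Fin n),
      (∑ j ∈ S, x j = 1 - p ^ S.card) ∧ S.card = k) :
    ∃ π : Equiv.Perm (Fin n), ∀ i : Fin n, x (π i) = (1 - p) * p ^ (i:ℕ) := by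
  classical
  have hall' : ∀ k : ℕ, ∃ S : Finset (Fin n),
      (∑ j ∈ S, x j = 1 - p ^ S.card) ∧ S.card = min k n :=
    fun k => hall (min k n) (min_le_right _ _)
  choose Sf hSf1 hSf2 using hall'
  have hmono : ∀ k l : ℕ, k ≤ l → Sf k ⊆ Sf l := by
    intro k l hkl
    rcases tight_chain p n hp0 hp1 x hxS (Sf k) (Sf l) (hSf1 k) (hSf1 l) with h | h
    · exact h
    · have hcc : (Sf k).card ≤ (Sf l).card := by
        rw [hSf2, hSf2]
        omega
      have heq : Sf l = Sf k := Finset.eq_of_subset_of_card_le h hcc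
      rw [heq]
  have hstep : ∀ k : Fin n, ∃ a, Sf ((k:ℕ)+1) \ Sf (k:ℕ) = {a} := by
    intro k
    have hklt : (k:ℕ) < n := k.isLt
    have hcard : (Sf ((k:ℕ)+1) \ Sf (k:ℕ)).card = 1 := by
      rw [Finset.card_sdiff_of_subset (hmono _ _ (Nat.le_succ _)), hSf2, hSf2]
      omega
    exact Finset.card_eq_one.1 hcard
  choose π0 hπ0 using hstep
  have hmem : ∀ k : Fin n, π0 k ∈ Sf ((k:ℕ)+1) ∧ π0 k ∉ Sf (k:ℕ) := by
    intro k
    have : π0 k ∈ Sf ((k:ℕ)+1) \ Sf (k:ℕ) := by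
      rw [hπ0 k]
      exact Finset.mem_singleton_self _
    exact Finset.mem_sdiff.1 this
  have hval : ∀ k : Fin n, x (π0 k) = (1 - p) * p ^ (k:ℕ) := by
    intro k
    have hklt : (k:ℕ) < n := k.isLt
    have hunion := Finset.sdiff_union_of_subset (hmono (k:ℕ) ((k:ℕ)+1) (Nat.le_succ _))
    rw [hπ0 k] at hunion
    have hdisj : Disjoint {π0 k} (Sf (k:ℕ)) :=
      Finset.disjoint_singleton_left.2 (hmem k).2
    have hsum : ∑ j ∈ Sf ((k:ℕ)+1), x j = x (π0 k) + ∑ j ∈ Sf (k:ℕ), x j := by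
      rw [← hunion, Finset.sum_union hdisj, Finset.sum_singleton]
    have e1 : ∑ j ∈ Sf (k:ℕ), x j = 1 - p ^ (k:ℕ) := by
      rw [hSf1, hSf2, min_eq_left hklt.le]
    have e2 : ∑ j ∈ Sf ((k:ℕ)+1), x j = 1 - p ^ ((k:ℕ)+1) := by
      rw [hSf1, hSf2, min_eq_left (by omega : (k:ℕ)+1 ≤ n)]
    linear_combination e2 - hsum - e1
  have hinjlt : ∀ k l : Fin n, (k:ℕ) < (l:ℕ) → π0 k ≠ π0 l := by
    intro k l hkl heq
    have h1 : π0 k ∈ Sf ((k:ℕ)+1) := (hmem k).1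
    have h2 : π0 k ∈ Sf (l:ℕ) := hmono _ _ (by omega) h1
    rw [heq] at h2
    exact (hmem l).2 h2
  have hinj : Function.Injective π0 := by
    intro k l h
    rcases lt_trichotomy (k:ℕ) (l:ℕ) with hlt | he | hgt
    · exact absurd h (hinjlt k l hlt)
    · exact Fin.ext he
    · exact absurd h.symm (hinjlt l k hgt)
  refine ⟨Equiv.ofBijective π0 ((Fintype.bijective_iff_injective_and_card π0).2 ⟨hinj, rfl⟩),
    fun i => ?_⟩
  exact hval i


lemma lam_injective (p : ℝ) (hp0 : 0 < p) (hp1 : p < 1) (n : ℕ)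
    (lam : Equiv.Perm (Fin n) → Fin n → ℝ)
    (hlam : ∀ (π : Equiv.Perm (Fin n)) (i : Fin n), lam π (π i) = (1 - p) * p ^ (i : ℕ)) :
    Function.Injective lam := by
  intro π π' h
  have hpinj : ∀ s t : ℕ, p ^ s = p ^ t → s = t := by
    intro s t hst
    rcases lt_trichotomy s t with hlt | he | hgt
    · have := pow_lt_pow_right_of_lt_one₀ hp0 hp1 hlt
      linarith
    · exact he
    · have := pow_lt_pow_right_of_lt_one₀ hp0 hp1 hgt
      linarith
  apply Equiv.ext
  intro i
  have h1 : lam π (π i) = (1 - p) * p ^ (i:ℕ) := hlam π i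
  have h2 : lam π' (π' (π'.symm (π i))) = (1 - p) * p ^ ((π'.symm (π i) : Fin n) : ℕ) :=
    hlam π' (π'.symm (π i))
  rw [Equiv.apply_symm_apply] at h2
  rw [h] at h1
  have h3 : (1 - p) * p ^ (i:ℕ) = (1 - p) * p ^ ((π'.symm (π i) : Fin n) : ℕ) := by
    rw [← h1, h2]
  have hne : (1:ℝ) - p ≠ 0 := by linarith
  have h4 : (i:ℕ) = ((π'.symm (π i) : Fin n) : ℕ) := hpinj _ _ (mul_left_cancel₀ hne h3)
  have h5 : π'.symm (π i) = i := Fin.ext h4.symm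
  calc π i = π' (π'.symm (π i)) := (Equiv.apply_symm_apply π' (π i)).symm
    _ = π' i := by rw [h5]

/-- **Lemma (vertices of the dominant face).** -/
theorem dominant_face_vertices (p : ℝ) (hp0 : 0 < p) (hp1 : p < 1)
    (n : ℕ) (hn : 1 ≤ n)
    (F : Set (Fin n → ℝ))
    (hF : F = {l : Fin n → ℝ |
        (∀ j, 0 ≤ l j) ∧
        (∀ S : Finset (Fin n), S.Nonempty → (∑ j ∈ S, l j) ≤ 1 - p ^ S.card) ∧
        (∑ j : Fin n, l j) = 1 - p ^ n})
    (lam : Equiv.Perm (Fin n) → Fin n → ℝ)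
    (hlam : ∀ (π : Equiv.Perm (Fin n)) (i : Fin n), lam π (π i) = (1 - p) * p ^ (i : ℕ)) :
    (∀ π : Equiv.Perm (Fin n), lam π ∈ F ∧ lam π ∈ F.extremePoints ℝ) ∧
    (∀ x ∈ F.extremePoints ℝ, ∃ π : Equiv.Perm (Fin n), x = lam π) ∧
    Function.Injective lam := by
  refine ⟨fun π => ?_, fun x hx => ?_, lam_injective p hp0 hp1 n lam hlam⟩
  · have hmem : lam π ∈ F := by rw [hF]; exact lam_mem p hp0 hp1 n π (lam π) (hlam π)
    exact ⟨hmem, lam_extreme p hp0 hp1 n F hF π (lam π) (hlam π)⟩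
  · obtain ⟨hxF, hxe⟩ := (mem_extremePoints (𝕜 := ℝ)).1 hx
    have hxF' := hxF
    rw [hF] at hxF'
    obtain ⟨hx0, hxS, hxtot⟩ := hxF'
    have hsep := fun i j hij => tight_sep p hp0 hp1 n hn F hF x hxF hxe i j hij
    have hall := tight_all_cards p hp0 hp1 n x hxS hxtot hsep
    obtain ⟨π, hπ⟩ := exists_perm_of_cards p hp0 hp1 n x hxS hall
    refine ⟨π, ?_⟩
    funext j
    have h1 := hπ (π.symm j)
    rw [Equiv.apply_symm_apply] at h1
    have h2 := hlam π (π.symm j)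
    rw [Equiv.apply_symm_apply] at h2
    rw [h1, h2]
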